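/- With m,n ≥ 2, in O_q(M_{m,n})[X_{1n}⁻¹] with X'_{ij} = X_{ij} − q⁻¹X_{1j}X_{in}X_{1n}⁻¹, for 2 ≤ i ≤ m and 1 ≤ l ≤ n−1 one has: X_{in}X'_{kl} = X'_{kl}X_{in} for 2 ≤ k < i; X_{in}X'_{il} = qX'_{il}X_{in}; and X_{in}X'_{kl} − X'_{kl}X_{in} = (q−q⁻¹)X_{kn}X'_{il} for i < k ≤ m. -/
import Mathlib


noncomputable section
open scoped BigOperators

/-- The defining relations of an `m × n` `q`-quantum matrix. -/
def IsQMat {k A : Type*} [Field k] [Ring A] [Algebra k A] (q : k) {m n : ℕ}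
    (X : Fin m → Fin n → A) : Prop :=
  (∀ (i : Fin m) (j l : Fin n), j < l → X i j * X i l = q • (X i l * X i j)) ∧
  (∀ (i r : Fin m) (j : Fin n), i < r → X i j * X r j = q • (X r j * X i j)) ∧
  (∀ (i r : Fin m) (j l : Fin n), i < r → j < l → X i l * X r j = X r j * X i l) ∧
  (∀ (i r : Fin m) (j l : Fin n), i < r → j < l →
    X i j * X r l - X r l * X i j = (q - q⁻¹) • (X i l * X r j))

/-- The relations defining `O_q(M_{m,n})` as a quotient of the free algebra. -/
inductive QMRel (k : Type*) [Field k] (q : k) (m n : ℕ) :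
    FreeAlgebra k (Fin m × Fin n) → FreeAlgebra k (Fin m × Fin n) → Prop
  | row (i : Fin m) (j l : Fin n) (h : j < l) :
      QMRel k q m n (FreeAlgebra.ι k (i, j) * FreeAlgebra.ι k (i, l))
        (q • (FreeAlgebra.ι k (i, l) * FreeAlgebra.ι k (i, j)))
  | col (i r : Fin m) (j : Fin n) (h : i < r) :
      QMRel k q m n (FreeAlgebra.ι k (i, j) * FreeAlgebra.ι k (r, j))
        (q • (FreeAlgebra.ι k (r, j) * FreeAlgebra.ι k (i, j)))
  | anti (i r : Fin m) (j l : Fin n) (h1 : i < r) (h2 : j < l) :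
      QMRel k q m n (FreeAlgebra.ι k (i, l) * FreeAlgebra.ι k (r, j))
        (FreeAlgebra.ι k (r, j) * FreeAlgebra.ι k (i, l))
  | diag (i r : Fin m) (j l : Fin n) (h1 : i < r) (h2 : j < l) :
      QMRel k q m n (FreeAlgebra.ι k (i, j) * FreeAlgebra.ι k (r, l))
        (FreeAlgebra.ι k (r, l) * FreeAlgebra.ι k (i, j) +
          (q - q⁻¹) • (FreeAlgebra.ι k (i, l) * FreeAlgebra.ι k (r, j)))

/-- The quantum matrix algebra `O_q(M_{m,n})`. -/
abbrev OqM (k : Type*) [Field k] (q : k) (m n : ℕ) := RingQuot (QMRel k q m n)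

/-- The canonical generators `X_{ij}` of `O_q(M_{m,n})`. -/
def qX (k : Type*) [Field k] (q : k) (m n : ℕ) (i : Fin m) (j : Fin n) : OqM k q m n :=
  RingQuot.mkAlgHom k (QMRel k q m n) (FreeAlgebra.ι k (i, j))

/-- The number of inversions (the length `ℓ(σ)`) of a permutation of `Fin t`. -/
def invCount {t : ℕ} (σ : Equiv.Perm (Fin t)) : ℕ :=
  Finset.card (Finset.univ.filter (fun p : Fin t × Fin t => p.1 < p.2 ∧ σ p.2 < σ p.1))

/-- The quantum determinant of a `t × t` matrix with entries in an algebra: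
`Σ_σ (-q)^{ℓ(σ)} M_{1,σ(1)} ⋯ M_{t,σ(t)}`. -/
def qdet {k : Type*} [Field k] {A : Type*} [Ring A] [Algebra k A] (q : k) {t : ℕ}
    (M : Fin t → Fin t → A) : A :=
  ∑ σ : Equiv.Perm (Fin t), ((-q) ^ invCount σ) • (List.ofFn (fun i => M i (σ i))).prod

/-- The quantum minor `[I|J]` of the matrix `X` on rows `I` and columns `J`. -/
def qminor {k : Type*} [Field k] {A : Type*} [Ring A] [Algebra k A] (q : k) {m n t : ℕ}
    (X : Fin m → Fin n → A) (I : Finset (Fin m)) (J : Finset (Fin n))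
    (hI : I.card = t) (hJ : J.card = t) : A :=
  qdet q (fun a b => X (I.orderIsoOfFin hI a) (J.orderIsoOfFin hJ b))

/-- The elements `X'_{ij} = X_{ij} - q⁻¹ X_{1j} X_{in} X_{1n}⁻¹` in a localisation of
`O_q(M_{m,n})` at the normal element `X_{1n}`, where `φ` is the localisation map and
`u = X_{1n}⁻¹`. -/
def Xp {k B : Type*} [Field k] [Ring B] [Algebra k B] (q : k) {m n : ℕ}
    (hm : 0 < m) (hn : 0 < n) (φ : OqM k q m n →ₐ[k] B) (u : B)
    (i : Fin m) (j : Fin n) : B :=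
  φ (qX k q m n i j) -
    q⁻¹ • (φ (qX k q m n ⟨0, hm⟩ j) * φ (qX k q m n i ⟨n - 1, by omega⟩) * u)


section Aux
variable {k B : Type*} [Field k] [Ring B] [Algebra k B]

private lemma au_swap (q : k) (a x u : B) (hc : x * a = q • (a * x))
    (hu1 : x * u = 1) (hu2 : u * x = 1) : a * u = q • (u * a) := by
  have h1 : a * u = u * (x * a) * u := by rw [← mul_assoc u x a, hu2, one_mul]
  rw [h1, hc]
  simp [mul_smul_comm, smul_mul_assoc, mul_assoc, hu1]

private lemma xau (q : k) (a x u : B) (hc : x * a = q • (a * x))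
    (hu1 : x * u = 1) : x * (a * u) = q • a := by
  rw [← mul_assoc, hc]
  simp [smul_mul_assoc, mul_assoc, hu1]

private lemma tail_sub (q : k) (a b0l x bil : B)
    (hd : b0l * a - a * b0l = (q - q⁻¹) • (x * bil)) :
    ∀ t : B, a * (b0l * t) = b0l * (a * t) - (q - q⁻¹) • (x * (bil * t)) := by
  intro t
  have h0 : a * b0l = b0l * a - (q - q⁻¹) • (x * bil) := by rw [← hd]; abel
  calc a * (b0l * t) = (a * b0l) * t := by rw [mul_assoc]
    _ = _ := by rw [h0, sub_mul, smul_mul_assoc, mul_assoc b0l a t, mul_assoc x bil t]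

private lemma aux2 (q : k) (hq : q ≠ 0) (a bil b0l x u : B)
    (hu1 : x * u = 1) (hu2 : u * x = 1)
    (hrow : bil * a = q • (a * bil))
    (hd : b0l * a - a * b0l = (q - q⁻¹) • (x * bil))
    (ha : x * bil = bil * x)
    (hc : x * a = q • (a * x)) :
    a * (bil - q⁻¹ • (b0l * a * u)) = q • ((bil - q⁻¹ • (b0l * a * u)) * a) := by
  have hau := au_swap q a x u hc hu1 hu2
  have e1 : a * bil = q⁻¹ • (bil * a) := by
    rw [hrow, smul_smul, inv_mul_cancel₀ hq, one_smul]
  have e2 := tail_sub q a b0l x bil hd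
  have e3 : a * (a * u) = q • (a * (u * a)) := by rw [hau, mul_smul_comm]
  have e4 : x * (bil * (a * u)) = q • (bil * a) := by
    rw [← mul_assoc, ha, mul_assoc, xau q a x u hc hu1, mul_smul_comm]
  simp only [mul_sub, sub_mul, smul_sub, smul_mul_assoc, mul_smul_comm, smul_smul, mul_assoc]
  rw [e1, e2 (a * u), e3, e4]
  simp only [mul_smul_comm, smul_smul, smul_sub]
  match_scalars <;> (field_simp; try ring)

private lemma aux1 (q : k) (hq : q ≠ 0) (a brl b0l brN bil x u : B)
    (hu1 : x * u = 1) (hu2 : u * x = 1)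
    (hd1 : brl * a - a * brl = (q - q⁻¹) • (brN * bil))
    (hd2 : b0l * a - a * b0l = (q - q⁻¹) • (x * bil))
    (hc1 : brN * a = q • (a * brN))
    (hc2 : x * a = q • (a * x))
    (hc3 : x * brN = q • (brN * x))
    (ha1 : x * bil = bil * x)
    (ha2 : brN * bil = bil * brN) :
    a * (brl - q⁻¹ • (b0l * brN * u)) = (brl - q⁻¹ • (b0l * brN * u)) * a := by
  have hau := au_swap q a x u hc2 hu1 hu2
  have e0 : a * brl = brl * a - (q - q⁻¹) • (brN * bil) := by rw [← hd1]; abel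
  have e2 := tail_sub q a b0l x bil hd2
  have e3 : a * (brN * u) = brN * (u * a) := by
    have h : a * brN = q⁻¹ • (brN * a) := by
      rw [hc1, smul_smul, inv_mul_cancel₀ hq, one_smul]
    rw [← mul_assoc, h, smul_mul_assoc, mul_assoc, hau, mul_smul_comm, smul_smul,
      inv_mul_cancel₀ hq, one_smul]
  have e4 : x * (bil * (brN * u)) = q • (bil * brN) := by
    rw [← mul_assoc, ha1, mul_assoc, ← mul_assoc x brN u, hc3, smul_mul_assoc,
      mul_assoc, hu1, mul_one, mul_smul_comm]
  simp only [mul_sub, sub_mul, smul_sub, smul_mul_assoc, mul_smul_comm, smul_smul, mul_assoc]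
  rw [e0, e2 (brN * u), e3, e4, ha2]
  simp only [mul_smul_comm, smul_smul, smul_sub]
  match_scalars <;> (field_simp; try ring)

private lemma aux3 (q : k) (hq : q ≠ 0) (a brl b0l brN bil x u : B)
    (hu1 : x * u = 1) (hu2 : u * x = 1)
    (ha1 : a * brl = brl * a)
    (hd2 : b0l * a - a * b0l = (q - q⁻¹) • (x * bil))
    (hc1 : a * brN = q • (brN * a))
    (hc2 : x * a = q • (a * x))
    (hc3 : x * brN = q • (brN * x))
    (hc4 : x * brl = brl * x)
    (ha2 : x * bil = bil * x)
    (hd3 : bil * brN - brN * bil = (q - q⁻¹) • (a * brl))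
    (hd4 : b0l * brN - brN * b0l = (q - q⁻¹) • (x * brl)) :
    a * (brl - q⁻¹ • (b0l * brN * u)) - (brl - q⁻¹ • (b0l * brN * u)) * a
      = (q - q⁻¹) • (brN * (bil - q⁻¹ • (b0l * a * u))) := by
  have hau := au_swap q a x u hc2 hu1 hu2
  have e2 := tail_sub q a b0l x bil hd2
  have e3 : a * (brN * u) = (q * q) • (brN * (u * a)) := by
    rw [← mul_assoc, hc1, smul_mul_assoc, mul_assoc, hau, mul_smul_comm, smul_smul]
  have e4 : x * (bil * (brN * u)) = q • (bil * brN) := by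
    rw [← mul_assoc, ha2, mul_assoc, ← mul_assoc x brN u, hc3, smul_mul_assoc,
      mul_assoc, hu1, mul_one, mul_smul_comm]
  have e5 : bil * brN = brN * bil + (q - q⁻¹) • (brl * a) := by
    rw [← ha1, ← hd3]; abel
  have e6 : ∀ t, b0l * (brN * t) = brN * (b0l * t) + (q - q⁻¹) • (x * (brl * t)) := by
    intro t
    have h0 : b0l * brN = brN * b0l + (q - q⁻¹) • (x * brl) := by rw [← hd4]; abel
    rw [← mul_assoc, h0, add_mul, smul_mul_assoc, mul_assoc brN b0l t, mul_assoc x brl t]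
  have e7 : x * (brl * (u * a)) = brl * a := by
    rw [← mul_assoc, hc4, mul_assoc, ← mul_assoc x u a, hu1, one_mul]
  simp only [mul_sub, sub_mul, smul_sub, smul_mul_assoc, mul_smul_comm, smul_smul, mul_assoc]
  rw [ha1, e2 (brN * u), e3, e4, e5, hau]
  simp only [mul_smul_comm, smul_smul, smul_sub, smul_add, mul_add]
  rw [e6 (u * a), e7]
  simp only [mul_smul_comm, smul_smul, smul_sub, smul_add, mul_add]
  match_scalars <;> (field_simp; try ring)

end Aux

/-- Relations between the last-column generators `X_{in}` and the elements `X'_{kl}` in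
`O_q(M_{m,n})[X_{1n}⁻¹]` (one-based: `2 ≤ i ≤ m`, `1 ≤ l ≤ n-1`). -/
theorem relations_last_column_with_xprime {k B : Type*} [Field k] [Ring B] [Algebra k B]
    (q : k) (hq : q ≠ 0) {m n : ℕ} (hm : 2 ≤ m) (hn : 2 ≤ n)
    (φ : OqM k q m n →ₐ[k] B) (hφ : Function.Injective φ) (u : B)
    (hu1 : φ (qX k q m n ⟨0, by omega⟩ ⟨n - 1, by omega⟩) * u = 1)
    (hu2 : u * φ (qX k q m n ⟨0, by omega⟩ ⟨n - 1, by omega⟩) = 1)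
    (hloc : ∀ b : B, ∃ (a : OqM k q m n) (p : ℕ), b = φ a * u ^ p)
    (i : Fin m) (hi : 1 ≤ (i : ℕ)) (l : Fin n) (hl : (l : ℕ) < n - 1) :
    (∀ r : Fin m, 1 ≤ (r : ℕ) → (r : ℕ) < (i : ℕ) →
        φ (qX k q m n i ⟨n - 1, by omega⟩) * Xp q (by omega) (by omega) φ u r l
          = Xp q (by omega) (by omega) φ u r l * φ (qX k q m n i ⟨n - 1, by omega⟩)) ∧
    (φ (qX k q m n i ⟨n - 1, by omega⟩) * Xp q (by omega) (by omega) φ u i l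
        = q • (Xp q (by omega) (by omega) φ u i l * φ (qX k q m n i ⟨n - 1, by omega⟩))) ∧
    (∀ r : Fin m, (i : ℕ) < (r : ℕ) →
        φ (qX k q m n i ⟨n - 1, by omega⟩) * Xp q (by omega) (by omega) φ u r l
            - Xp q (by omega) (by omega) φ u r l * φ (qX k q m n i ⟨n - 1, by omega⟩)
          = (q - q⁻¹) • (φ (qX k q m n r ⟨n - 1, by omega⟩) *
              Xp q (by omega) (by omega) φ u i l)) := by
  
  have hn1 : n - 1 < n := by omega
  have hm0 : 0 < m := by omega
  have key : ∀ {x y : FreeAlgebra k (Fin m × Fin n)}, QMRel k q m n x y →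
      φ (RingQuot.mkAlgHom k (QMRel k q m n) x) = φ (RingQuot.mkAlgHom k (QMRel k q m n) y) :=
    fun h => congrArg φ (RingQuot.mkAlgHom_rel k h)
  have hrow : ∀ (i' : Fin m) (j l' : Fin n), j < l' →
      φ (qX k q m n i' j) * φ (qX k q m n i' l')
        = q • (φ (qX k q m n i' l') * φ (qX k q m n i' j)) := by
    intro i' j l' h
    simpa [qX, map_mul, map_smul] using key (QMRel.row i' j l' h)
  have hcol : ∀ (i' r : Fin m) (j : Fin n), i' < r →
      φ (qX k q m n i' j) * φ (qX k q m n r j)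
        = q • (φ (qX k q m n r j) * φ (qX k q m n i' j)) := by
    intro i' r j h
    simpa [qX, map_mul, map_smul] using key (QMRel.col i' r j h)
  have hanti : ∀ (i' r : Fin m) (j l' : Fin n), i' < r → j < l' →
      φ (qX k q m n i' l') * φ (qX k q m n r j)
        = φ (qX k q m n r j) * φ (qX k q m n i' l') := by
    intro i' r j l' h1 h2
    simpa [qX, map_mul, map_smul] using key (QMRel.anti i' r j l' h1 h2)
  have hdiag : ∀ (i' r : Fin m) (j l' : Fin n), i' < r → j < l' →
      φ (qX k q m n i' j) * φ (qX k q m n r l') - φ (qX k q m n r l') * φ (qX k q m n i' j)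
        = (q - q⁻¹) • (φ (qX k q m n i' l') * φ (qX k q m n r j)) := by
    intro i' r j l' h1 h2
    have h := key (QMRel.diag i' r j l' h1 h2)
    simp only [qX, map_mul, map_add, map_smul] at h ⊢
    rw [h]; abel
  have hzi : (⟨0, hm0⟩ : Fin m) < i := hi
  have hlN : l < (⟨n - 1, hn1⟩ : Fin n) := hl
  refine ⟨?_, ?_, ?_⟩
  · intro r hr1 hr2
    have hri : r < i := hr2
    have hzr : (⟨0, hm0⟩ : Fin m) < r := hr1
    simp only [Xp]
    exact aux1 q hq _ _ _ _ _ _ u hu1 hu2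
      (hdiag r i l ⟨n - 1, hn1⟩ hri hlN)
      (hdiag ⟨0, hm0⟩ i l ⟨n - 1, hn1⟩ hzi hlN)
      (hcol r i ⟨n - 1, hn1⟩ hri)
      (hcol ⟨0, hm0⟩ i ⟨n - 1, hn1⟩ hzi)
      (hcol ⟨0, hm0⟩ r ⟨n - 1, hn1⟩ hzr)
      (hanti ⟨0, hm0⟩ i l ⟨n - 1, hn1⟩ hzi hlN)
      (hanti r i l ⟨n - 1, hn1⟩ hri hlN)
  · simp only [Xp]
    exact aux2 q hq _ _ _ _ u hu1 hu2
      (hrow i l ⟨n - 1, hn1⟩ hlN)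
      (hdiag ⟨0, hm0⟩ i l ⟨n - 1, hn1⟩ hzi hlN)
      (hanti ⟨0, hm0⟩ i l ⟨n - 1, hn1⟩ hzi hlN)
      (hcol ⟨0, hm0⟩ i ⟨n - 1, hn1⟩ hzi)
  · intro r hr
    have hir : i < r := hr
    have hzr : (⟨0, hm0⟩ : Fin m) < r := lt_trans hzi hir
    simp only [Xp]
    exact aux3 q hq _ _ _ _ _ _ u hu1 hu2
      (hanti i r l ⟨n - 1, hn1⟩ hir hlN)
      (hdiag ⟨0, hm0⟩ i l ⟨n - 1, hn1⟩ hzi hlN)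
      (hcol i r ⟨n - 1, hn1⟩ hir)
      (hcol ⟨0, hm0⟩ i ⟨n - 1, hn1⟩ hzi)
      (hcol ⟨0, hm0⟩ r ⟨n - 1, hn1⟩ hzr)
      (hanti ⟨0, hm0⟩ r l ⟨n - 1, hn1⟩ hzr hlN)
      (hanti ⟨0, hm0⟩ i l ⟨n - 1, hn1⟩ hzi hlN)
      (hdiag i r l ⟨n - 1, hn1⟩ hir hlN)
      (hdiag ⟨0, hm0⟩ r l ⟨n - 1, hn1⟩ hzr hlN)
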